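/- arXiv:1605.07541 — 5 statements merged into one kernel-verified Lean document; each statement's English description precedes it below -/
import Mathlib

section
/- For every non-signalling learning protocol P there exists, for each a ∈ A, a probability distribution T(·|a) on the (finite) set of functions f : X → Y such that the protocol P̃ defined by P̃(y₁,…,yₙ | a, x₁,…,xₙ) = Σ_f T(f|a) · Πᵢ δ_{yᵢ, f(xᵢ)} satisfies E[P̃|a] = E[P|a] for every a ∈ A. -/
/-!
STATEMENT 0: Every non-signalling (inductive) classical learning protocol has the same
conditional expected risk, for every training value `a`, as a protocol of the form
`P̃(y₁..yₙ | a, x₁..xₙ) = Σ_f T(f|a) Πᵢ δ_{yᵢ, f(xᵢ)}` for some stochastic map `T(·|a)`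
on the finite set of classifying functions `f : X → Y`.
-/

/-- The conditional expected risk `E[P|a]` of a protocol `P` given training value `a`,
for test-instance/label distribution `p` on `X × Y`. -/
noncomputable def condRisk {A X Y : Type*} [Fintype X] [Fintype Y] [DecidableEq Y]
    (n : ℕ) (p : X × Y → ℝ)
    (P : A → (Fin n → X) → (Fin n → Y) → ℝ) (a : A) : ℝ :=
  ∑ x : Fin n → X, ∑ y : Fin n → Y, ∑ y' : Fin n → Y,
    ((1 / (n : ℝ)) * ∑ i, (if y i = y' i then (0 : ℝ) else 1)) * P a x y
      * ∏ i, p (x i, y' i)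

/-- A protocol is non-signalling if each single-site marginal
`Pᵢ(yᵢ | a, x₁..xₙ)` depends only on `a` and `xᵢ`. -/
def NonSignalling {A X Y : Type*} [Fintype Y] [DecidableEq Y]
    (n : ℕ) (P : A → (Fin n → X) → (Fin n → Y) → ℝ) : Prop :=
  ∀ (i : Fin n) (a : A) (x x' : Fin n → X), x i = x' i →
    ∀ yi : Y,
      (∑ y : Fin n → Y, if y i = yi then P a x y else 0)
        = ∑ y : Fin n → Y, if y i = yi then P a x' y else 0


open Finset

lemma sum_prod_fn {ι W : Type*} [Fintype ι] [DecidableEq ι] [Fintype W]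
    (q : ι → W → ℝ) :
    ∑ z : ι → W, ∏ j, q j (z j) = ∏ j, ∑ w, q j w := by
  rw [Finset.prod_univ_sum, Fintype.piFinset_univ]

lemma pick_coord {ι W : Type*} [Fintype ι] [DecidableEq ι] [Fintype W]
    (i : ι) (g : W → ℝ) (q : ι → W → ℝ) (hq : ∀ j, ∑ w, q j w = 1) :
    ∑ z : ι → W, g (z i) * ∏ j, q j (z j) = ∑ w, g w * q i w := by
  have h1 : ∀ z : ι → W, g (z i) * ∏ j, q j (z j)
      = ∏ j, (if j = i then g (z j) * q j (z j) else q j (z j)) := by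
    intro z
    rw [← Finset.mul_prod_erase univ
          (fun j => if j = i then g (z j) * q j (z j) else q j (z j)) (Finset.mem_univ i),
        ← Finset.mul_prod_erase univ (fun j => q j (z j)) (Finset.mem_univ i),
        if_pos rfl, ← mul_assoc]
    congr 1
    exact Finset.prod_congr rfl fun j hj => (if_neg (Finset.ne_of_mem_erase hj)).symm
  calc ∑ z : ι → W, g (z i) * ∏ j, q j (z j)
      = ∑ z : ι → W, ∏ j, (if j = i then g (z j) * q j (z j) else q j (z j)) :=
        Finset.sum_congr rfl fun z _ => h1 z
    _ = ∏ j, ∑ w, (if j = i then g w * q j w else q j w) := sum_prod_fn (fun j w => if j = i then g w * q j w else q j w)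
    _ = ∑ w, g w * q i w := by
        rw [← Finset.mul_prod_erase univ
              (fun j => ∑ w, if j = i then g w * q j w else q j w) (Finset.mem_univ i)]
        have h2 : ∏ j ∈ univ.erase i, (∑ w, if j = i then g w * q j w else q j w) = 1 :=
          Finset.prod_eq_one fun j hj => by
            rw [Finset.sum_congr rfl fun w _ => if_neg (Finset.ne_of_mem_erase hj)]
            exact hq j
        rw [h2, mul_one]
        simp

lemma sum_pair {X Y : Type*} [Fintype X] [Fintype Y] {n : ℕ}
    (p : X × Y → ℝ) (hp1 : ∑ z : X × Y, p z = 1)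
    (i : Fin n) (G : X → Y → ℝ) :
    (∑ x : Fin n → X, ∑ y : Fin n → Y, G (x i) (y i) * ∏ j, p (x j, y j))
      = ∑ ξ : X, ∑ η : Y, G ξ η * p (ξ, η) := by
  have key := pick_coord (ι := Fin n) (W := X × Y) i (fun w => G w.1 w.2)
      (fun _ => p) (fun _ => hp1)
  calc (∑ x : Fin n → X, ∑ y : Fin n → Y, G (x i) (y i) * ∏ j, p (x j, y j))
      = ∑ w : (Fin n → X) × (Fin n → Y), G (w.1 i) (w.2 i) * ∏ j, p (w.1 j, w.2 j) :=
        (Fintype.sum_prod_type (f := fun w : (Fin n → X) × (Fin n → Y) =>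
          G (w.1 i) (w.2 i) * ∏ j, p (w.1 j, w.2 j))).symm
    _ = ∑ z : Fin n → X × Y, G (z i).1 (z i).2 * ∏ j, p (z j) := by
        refine Fintype.sum_equiv (Equiv.arrowProdEquivProdArrow (Fin n) (fun _ => X) (fun _ => Y)).symm _ _ ?_
        intro w
        simp [Equiv.arrowProdEquivProdArrow]
    _ = ∑ w : X × Y, G w.1 w.2 * p w := key
    _ = ∑ ξ : X, ∑ η : Y, G ξ η * p (ξ, η) :=
        Fintype.sum_prod_type (f := fun w : X × Y => G w.1 w.2 * p w)

lemma sum_rot {α β γ δ M : Type*} [AddCommMonoid M]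
    [Fintype α] [Fintype β] [Fintype γ] [Fintype δ]
    (f : α → β → γ → δ → M) :
    (∑ a, ∑ b, ∑ c, ∑ d, f a b c d) = ∑ d, ∑ a, ∑ b, ∑ c, f a b c d := by
  calc (∑ a, ∑ b, ∑ c, ∑ d, f a b c d)
      = ∑ a, ∑ b, ∑ d, ∑ c, f a b c d :=
        Finset.sum_congr rfl fun a _ => Finset.sum_congr rfl fun b _ => Finset.sum_comm
    _ = ∑ a, ∑ d, ∑ b, ∑ c, f a b c d :=
        Finset.sum_congr rfl fun a _ => Finset.sum_comm
    _ = ∑ d, ∑ a, ∑ b, ∑ c, f a b c d := Finset.sum_comm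

set_option maxHeartbeats 1000000 in
lemma condRisk_eq {A X Y : Type*} [Fintype X] [Fintype Y] [DecidableEq Y]
    (n : ℕ) (p : X × Y → ℝ) (hp1 : ∑ z : X × Y, p z = 1)
    (P : A → (Fin n → X) → (Fin n → Y) → ℝ)
    (m : A → Fin n → X → Y → ℝ)
    (hm : ∀ a (i : Fin n) (x : Fin n → X) (η : Y),
      (∑ y : Fin n → Y, if y i = η then P a x y else 0) = m a i (x i) η)
    (a : A) :
    condRisk n p P a
      = (1 / (n:ℝ)) * ∑ i : Fin n, ∑ ξ : X, ∑ η : Y, ∑ η' : Y,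
          (if η = η' then (0:ℝ) else 1) * m a i ξ η * p (ξ, η') := by
  unfold condRisk
  simp_rw [Finset.mul_sum, Finset.sum_mul]
  simp_rw [mul_assoc]
  simp_rw [← Finset.mul_sum]
  congr 1
  rw [sum_rot]
  refine Finset.sum_congr rfl fun i _ => ?_
  have hinner : ∀ (x : Fin n → X) (η' : Y),
      (∑ y : Fin n → Y, (if y i = η' then (0:ℝ) else 1) * P a x y)
        = ∑ η, (if η = η' then (0:ℝ) else 1) * m a i (x i) η := by
    intro x η'
    have h3 : ∀ η : Y, (if η = η' then (0:ℝ) else 1) * m a i (x i) η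
        = ∑ y : Fin n → Y, (if y i = η then ((if η = η' then (0:ℝ) else 1) * P a x y) else 0) := by
      intro η
      rw [← hm a i x η, Finset.mul_sum]
      exact Finset.sum_congr rfl fun y _ => by split <;> simp
    rw [Finset.sum_congr rfl fun η _ => h3 η, Finset.sum_comm]
    exact Finset.sum_congr rfl fun y _ => by simp
  calc (∑ x : Fin n → X, ∑ y : Fin n → Y, ∑ y' : Fin n → Y,
          (if y i = y' i then (0:ℝ) else 1) * (P a x y * ∏ j, p (x j, y' j)))
      = ∑ x : Fin n → X, ∑ y' : Fin n → Y, ∑ y : Fin n → Y,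
          (if y i = y' i then (0:ℝ) else 1) * (P a x y * ∏ j, p (x j, y' j)) :=
        Finset.sum_congr rfl fun x _ => Finset.sum_comm
    _ = ∑ x : Fin n → X, ∑ y' : Fin n → Y,
          (∑ η, (if η = y' i then (0:ℝ) else 1) * m a i (x i) η) * ∏ j, p (x j, y' j) := by
        refine Finset.sum_congr rfl fun x _ => Finset.sum_congr rfl fun y' _ => ?_
        rw [← hinner x (y' i), Finset.sum_mul]
        exact Finset.sum_congr rfl fun y _ => by ring
    _ = ∑ ξ : X, ∑ η' : Y,
          (∑ η, (if η = η' then (0:ℝ) else 1) * m a i ξ η) * p (ξ, η') :=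
        sum_pair p hp1 i (fun ξ η' => ∑ η, (if η = η' then (0:ℝ) else 1) * m a i ξ η)
    _ = ∑ ξ : X, ∑ η : Y, ∑ η' : Y,
          (if η = η' then (0:ℝ) else 1) * (m a i ξ η * p (ξ, η')) := by
        refine Finset.sum_congr rfl fun ξ _ => ?_
        simp_rw [Finset.sum_mul, mul_assoc]
        exact Finset.sum_comm


theorem inductive_learning_splits
    {A X Y : Type*} [Fintype A] [Fintype X] [Fintype Y]
    [Nonempty A] [Nonempty X] [Nonempty Y] [DecidableEq X] [DecidableEq Y]
    (n : ℕ) (hn : 1 ≤ n)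
    (p : X × Y → ℝ) (hp0 : ∀ z, 0 ≤ p z) (hp1 : ∑ z : X × Y, p z = 1)
    (P : A → (Fin n → X) → (Fin n → Y) → ℝ)
    (hP0 : ∀ a x y, 0 ≤ P a x y) (hP1 : ∀ a x, ∑ y : Fin n → Y, P a x y = 1)
    (hNS : NonSignalling n P) :
    ∃ T : A → (X → Y) → ℝ,
      (∀ a f, 0 ≤ T a f) ∧ (∀ a, ∑ f : X → Y, T a f = 1) ∧
      ∀ a, condRisk n p
            (fun a x y => ∑ f : X → Y, T a f * ∏ i, (if y i = f (x i) then (1 : ℝ) else 0)) a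
          = condRisk n p P a := by
  classical
  have hn' : (n:ℝ) ≠ 0 := Nat.cast_ne_zero.mpr (by omega)
  set Q : Fin n → A → X → Y → ℝ :=
    fun i a ξ η => ∑ y : Fin n → Y, if y i = η then P a (fun _ => ξ) y else 0 with hQdef
  have hQ0 : ∀ i a ξ η, 0 ≤ Q i a ξ η := by
    intro i a ξ η
    refine Finset.sum_nonneg fun y _ => ?_
    split
    · exact hP0 _ _ _
    · exact le_refl 0
  have hQ1 : ∀ i a ξ, ∑ η, Q i a ξ η = 1 := by
    intro i a ξ
    rw [Finset.sum_comm]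
    simp [hP1]
  set M : A → X → Y → ℝ := fun a ξ η => (1/(n:ℝ)) * ∑ i, Q i a ξ η with hMdef
  have hM0 : ∀ a ξ η, 0 ≤ M a ξ η := by
    intro a ξ η
    have : 0 ≤ ∑ i, Q i a ξ η := Finset.sum_nonneg fun i _ => hQ0 i a ξ η
    positivity
  have hM1 : ∀ a ξ, ∑ η, M a ξ η = 1 := by
    intro a ξ
    rw [← Finset.mul_sum, Finset.sum_comm]
    simp only [hQ1]
    simp [hn']
  refine ⟨fun a f => ∏ ξ, M a ξ (f ξ), ?_, ?_, ?_⟩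
  · exact fun a f => Finset.prod_nonneg fun ξ _ => hM0 a ξ (f ξ)
  · intro a
    rw [sum_prod_fn (fun ξ η => M a ξ η)]
    exact Finset.prod_eq_one fun ξ _ => hM1 a ξ
  · intro a
    have hmP : ∀ a (i : Fin n) (x : Fin n → X) (η : Y),
        (∑ y : Fin n → Y, if y i = η then P a x y else 0) = Q i a (x i) η :=
      fun a i x η => hNS i a x (fun _ => x i) rfl η
    have hmT : ∀ a' (i : Fin n) (x : Fin n → X) (η : Y),
        (∑ y : Fin n → Y, if y i = η then
            (∑ f : X → Y, (∏ ξ, M a' ξ (f ξ)) * ∏ j, (if y j = f (x j) then (1:ℝ) else 0))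
          else 0) = M a' (x i) η := by
      intro a' i x η
      have hstep1 : ∀ y : Fin n → Y,
          (if y i = η then
            (∑ f : X → Y, (∏ ξ, M a' ξ (f ξ)) * ∏ j, (if y j = f (x j) then (1:ℝ) else 0))
          else 0)
          = ∑ f : X → Y, (∏ ξ, M a' ξ (f ξ)) *
              ((if y i = η then (1:ℝ) else 0) * ∏ j, (if y j = f (x j) then (1:ℝ) else 0)) := by
        intro y
        split <;> simp [Finset.mul_sum]
      calc (∑ y : Fin n → Y, if y i = η then
            (∑ f : X → Y, (∏ ξ, M a' ξ (f ξ)) * ∏ j, (if y j = f (x j) then (1:ℝ) else 0))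
          else 0)
          = ∑ y : Fin n → Y, ∑ f : X → Y, (∏ ξ, M a' ξ (f ξ)) *
              ((if y i = η then (1:ℝ) else 0) * ∏ j, (if y j = f (x j) then (1:ℝ) else 0)) :=
            Finset.sum_congr rfl fun y _ => hstep1 y
        _ = ∑ f : X → Y, (∏ ξ, M a' ξ (f ξ)) *
              ∑ y : Fin n → Y, (if y i = η then (1:ℝ) else 0) * ∏ j, (if y j = f (x j) then (1:ℝ) else 0) := by
            rw [Finset.sum_comm]
            exact Finset.sum_congr rfl fun f _ => (Finset.mul_sum _ _ _).symm
        _ = ∑ f : X → Y, (∏ ξ, M a' ξ (f ξ)) * (if f (x i) = η then (1:ℝ) else 0) := by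
            refine Finset.sum_congr rfl fun f _ => ?_
            congr 1
            rw [pick_coord i (fun w => if w = η then (1:ℝ) else 0)
                  (fun j w => if w = f (x j) then (1:ℝ) else 0)
                  (fun j => by simp)]
            simp [eq_comm]
        _ = ∑ f : X → Y, (if f (x i) = η then (1:ℝ) else 0) * ∏ ξ, M a' ξ (f ξ) :=
            Finset.sum_congr rfl fun f _ => mul_comm _ _
        _ = ∑ v, (if v = η then (1:ℝ) else 0) * M a' (x i) v :=
            pick_coord (x i) (fun v => if v = η then (1:ℝ) else 0) (fun ξ v => M a' ξ v)
              (hM1 a')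
        _ = M a' (x i) η := by simp
    rw [condRisk_eq n p hp1 _ (fun a' i ξ η => M a' ξ η) hmT a,
        condRisk_eq n p hp1 P (fun a' i ξ η => Q i a' ξ η) hmP a]
    have hSM : (∑ ξ : X, ∑ η : Y, ∑ η' : Y, (if η = η' then (0:ℝ) else 1) * M a ξ η * p (ξ, η'))
        = (1/(n:ℝ)) * ∑ j : Fin n, ∑ ξ : X, ∑ η : Y, ∑ η' : Y,
            (if η = η' then (0:ℝ) else 1) * Q j a ξ η * p (ξ, η') := by
      simp only [hMdef]
      simp_rw [Finset.mul_sum, Finset.sum_mul]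
      rw [sum_rot]
      refine Finset.sum_congr rfl fun j _ => Finset.sum_congr rfl fun ξ _ =>
        Finset.sum_congr rfl fun η _ => Finset.sum_congr rfl fun η' _ => by ring
    simp only [hSM]
    rw [Finset.sum_const, Finset.card_univ, Fintype.card_fin, nsmul_eq_mul]
    field_simp
end

section
/- Let Q be a linear, completely positive, trace-preserving map from matrices on ℂ^{d_A} ⊗ (ℂ^{d_X})^{⊗n} to matrices on (ℂ^{d_Y})^{⊗n} that is non-signalling, i.e., for every k ∈ {0,…,n} there exists a linear map Q_k from matrices on ℂ^{d_A} ⊗ (ℂ^{d_X})^{⊗k} to matrices on (ℂ^{d_Y})^{⊗k} with tr_{Y_{k+1},…,Y_n}[Q(ρ)] = Q_k(tr_{X_{k+1},…,X_n}[ρ]) for all inputs ρ. Let ω = (id ⊗ Q)(|Ω⟩⟨Ω|) be the Choi matrix of Q, where |Ω⟩ = (d_A d_X^n)^{-1/2} Σ_i |i⟩|i⟩ is the maximally entangled vector between two copies of ℂ^{d_A} ⊗ (ℂ^{d_X})^{⊗n}, so that ω is a density matrix on ℂ^{d_A} ⊗ (ℂ^{d_X})^{⊗n} ⊗ (ℂ^{d_Y})^{⊗n}.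 Then for every k ≤ n: tr_{Y_{k+1},…,Y_n}[ω] = ω_k ⊗ I_{X_{k+1},…,X_n} / d_X^{n−k}, where ω_k = tr_{X_{k+1},…,X_n, Y_{k+1},…,Y_n}[ω]; moreover ω_k is the Choi matrix of the induced channel Q_k. -/
open scoped ComplexOrder

/-- Glue a configuration on the first `k` sites with one on the remaining `n - k` sites. -/
def glue {α : Type*} {k n : ℕ} (hk : k ≤ n) (v : Fin k → α) (u : Fin (n - k) → α) :
    Fin n → α :=
  fun i => Fin.append v u (Fin.cast (by omega) i)

/-- A linear map between matrix algebras is completely positive if all its ancillary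
extensions `id_m ⊗ Q` preserve positive semidefiniteness. -/
def IsCompletelyPositive {I K : Type*} [Fintype I] [Fintype K]
    (Q : Matrix I I ℂ →ₗ[ℂ] Matrix K K ℂ) : Prop :=
  ∀ (m : ℕ) (ρ : Matrix (Fin m × I) (Fin m × I) ℂ), ρ.PosSemidef →
    (Matrix.of fun (p q : Fin m × K) =>
      Q (Matrix.of fun i i' => ρ (p.1, i) (q.1, i')) p.2 q.2).PosSemidef

/-- Trace-preserving linear map between matrix algebras. -/
def IsTracePreserving {I K : Type*} [Fintype I] [Fintype K]
    (Q : Matrix I I ℂ →ₗ[ℂ] Matrix K K ℂ) : Prop :=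
  ∀ ρ : Matrix I I ℂ, (Q ρ).trace = ρ.trace

/-- The Choi matrix `(id ⊗ Q)(|Ω⟩⟨Ω|)` of a linear map `Q`, where
`|Ω⟩ = (dim I)^{-1/2} Σ_i |i⟩|i⟩`. -/
noncomputable def choi {I K : Type*} [Fintype I] [DecidableEq I] [Fintype K]
    (Q : Matrix I I ℂ →ₗ[ℂ] Matrix K K ℂ) : Matrix (I × K) (I × K) ℂ :=
  Matrix.of fun p q =>
    (Fintype.card I : ℂ)⁻¹ * Q (Matrix.single p.1 q.1 1) p.2 q.2

/-- Partial trace over the last `n - k` output (`Y`) factors. -/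
noncomputable def trYlast {dY k n : ℕ} (hk : k ≤ n)
    (M : Matrix (Fin n → Fin dY) (Fin n → Fin dY) ℂ) :
    Matrix (Fin k → Fin dY) (Fin k → Fin dY) ℂ :=
  Matrix.of fun w w' => ∑ u : Fin (n - k) → Fin dY, M (glue hk w u) (glue hk w' u)

/-- Partial trace over the last `n - k` input (`X`) factors, keeping `A`. -/
noncomputable def trXlast {dA dX k n : ℕ} (hk : k ≤ n)
    (ρ : Matrix (Fin dA × (Fin n → Fin dX)) (Fin dA × (Fin n → Fin dX)) ℂ) :
    Matrix (Fin dA × (Fin k → Fin dX)) (Fin dA × (Fin k → Fin dX)) ℂ :=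
  Matrix.of fun p q =>
    ∑ u : Fin (n - k) → Fin dX, ρ (p.1, glue hk p.2 u) (q.1, glue hk q.2 u)

/-- Partial trace of a Choi matrix on `A ⊗ X^{⊗n} ⊗ Y^{⊗n}` over the last `n - k`
`X` factors and the last `n - k` `Y` factors. -/
noncomputable def choiReduce {dA dX dY k n : ℕ} (hk : k ≤ n)
    (ω : Matrix ((Fin dA × (Fin n → Fin dX)) × (Fin n → Fin dY))
               ((Fin dA × (Fin n → Fin dX)) × (Fin n → Fin dY)) ℂ) :
    Matrix ((Fin dA × (Fin k → Fin dX)) × (Fin k → Fin dY))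
           ((Fin dA × (Fin k → Fin dX)) × (Fin k → Fin dY)) ℂ :=
  Matrix.of fun p q =>
    ∑ ux : Fin (n - k) → Fin dX, ∑ u : Fin (n - k) → Fin dY,
      ω ((p.1.1, glue hk p.1.2 ux), glue hk p.2 u)
        ((q.1.1, glue hk q.1.2 ux), glue hk q.2 u)

lemma glue_cast {α : Type*} {k n : ℕ} (hk : k ≤ n) (v : Fin k → α) (u : Fin (n-k) → α)
    (j : Fin (k + (n-k))) : glue hk v u (Fin.cast (by omega) j) = Fin.append v u j := by
  simp [glue, Fin.cast_cast]

lemma glue_eq_iff {α : Type*} {k n : ℕ} (hk : k ≤ n) {v v' : Fin k → α} {u u' : Fin (n-k) → α} :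
    glue hk v u = glue hk v' u' ↔ v = v' ∧ u = u' := by
  constructor
  · intro h
    have key : Fin.append v u = Fin.append v' u' := by
      funext j
      have := congrFun h (Fin.cast (by omega) j)
      rwa [glue_cast, glue_cast] at this
    constructor
    · funext i
      have := congrFun key (Fin.castAdd (n-k) i)
      simpa using this
    · funext i
      have := congrFun key (Fin.natAdd k i)
      simpa using this
  · rintro ⟨rfl, rfl⟩; rfl

lemma trXlast_std {dA dX k n : ℕ} (hk : k ≤ n) (a a' : Fin dA)
    (vk vk' : Fin k → Fin dX) (ux ux' : Fin (n-k) → Fin dX) :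
    trXlast hk (Matrix.single (a, glue hk vk ux) (a', glue hk vk' ux') 1)
      = if ux = ux' then Matrix.single (a, vk) (a', vk') 1 else 0 := by
  ext ⟨b, v⟩ ⟨b', v'⟩
  simp only [trXlast, Matrix.of_apply, Matrix.single, Prod.mk.injEq, glue_eq_iff]
  by_cases h : ux = ux'
  · subst h
    simp only [if_pos rfl]
    by_cases hb : a = b ∧ vk = v ∧ a' = b' ∧ vk' = v'
    · obtain ⟨rfl, rfl, rfl, rfl⟩ := hb
      rw [Finset.sum_eq_single ux]
      · norm_num
      · intro c _ hc; simp [hc.symm, Ne.symm hc]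
      · simp
    · rw [Finset.sum_eq_zero (fun c _ => if_neg (by first | tauto | (simp only [Prod.mk.injEq] at *; tauto)))]
      exact (if_neg (by first | tauto | (simp only [Prod.mk.injEq] at *; tauto))).symm
  · rw [if_neg h, Finset.sum_eq_zero]
    · simp
    · intro c _
      rw [if_neg]
      rintro ⟨⟨-, -, h1⟩, -, -, h2⟩
      exact h (h1.trans h2.symm)

section Main
variable {dA dX dY n : ℕ}

/-- The key computation: partial Y-trace of Choi entries via an induced channel. -/
lemma choi_key (hdX : 1 ≤ dX)
    (Q : Matrix (Fin dA × (Fin n → Fin dX)) (Fin dA × (Fin n → Fin dX)) ℂ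
          →ₗ[ℂ] Matrix (Fin n → Fin dY) (Fin n → Fin dY) ℂ)
    {k : ℕ} (hk : k ≤ n)
    (Qk : Matrix (Fin dA × (Fin k → Fin dX)) (Fin dA × (Fin k → Fin dX)) ℂ
              →ₗ[ℂ] Matrix (Fin k → Fin dY) (Fin k → Fin dY) ℂ)
    (hQk : ∀ ρ, trYlast hk (Q ρ) = Qk (trXlast hk ρ))
    (a a' : Fin dA) (vk vk' : Fin k → Fin dX) (ux ux' : Fin (n - k) → Fin dX)
    (w w' : Fin k → Fin dY) :
    (∑ u : Fin (n - k) → Fin dY,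
        choi Q ((a, glue hk vk ux), glue hk w u) ((a', glue hk vk' ux'), glue hk w' u))
      = (if ux = ux' then (1:ℂ) else 0) * ((dA : ℂ) * (dX:ℂ) ^ n)⁻¹ *
          Qk (Matrix.single (a, vk) (a', vk') 1) w w' := by
  have hcard : ((Fintype.card (Fin dA × (Fin n → Fin dX)) : ℂ)) = (dA : ℂ) * (dX:ℂ) ^ n := by
    simp
  have h1 : trYlast hk (Q (Matrix.single (a, glue hk vk ux) (a', glue hk vk' ux') 1)) w w'
      = Qk (trXlast hk (Matrix.single (a, glue hk vk ux) (a', glue hk vk' ux') 1)) w w' := by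
    rw [hQk]
  rw [trXlast_std] at h1
  simp only [choi, Matrix.of_apply]
  rw [← Finset.mul_sum, hcard]
  have h2 : (∑ u : Fin (n - k) → Fin dY,
      Q (Matrix.single (a, glue hk vk ux) (a', glue hk vk' ux') 1)
        (glue hk w u) (glue hk w' u))
      = trYlast hk (Q (Matrix.single (a, glue hk vk ux) (a', glue hk vk' ux') 1)) w w' := rfl
  rw [h2, h1]
  by_cases h : ux = ux'
  · simp [h, mul_comm]
  · simp [h]
end Main


/-- **Reduced Choi matrices of a non-signalling channel.**  If `Q` is a non-signalling
CPTP map, then the partial trace of its Choi matrix `ω` over the last `n - k` `Y`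
factors equals `ω_k ⊗ I/d_X^{n-k}` (entrywise), and `ω_k` is the Choi matrix of the
induced channel `Q_k`. -/
theorem choi_of_nonsignalling_channel
    (dA dX dY n : ℕ) (hdA : 1 ≤ dA) (hdX : 1 ≤ dX) (hdY : 1 ≤ dY) (hn : 1 ≤ n)
    (Q : Matrix (Fin dA × (Fin n → Fin dX)) (Fin dA × (Fin n → Fin dX)) ℂ
          →ₗ[ℂ] Matrix (Fin n → Fin dY) (Fin n → Fin dY) ℂ)
    (hCP : IsCompletelyPositive Q) (hTP : IsTracePreserving Q)
    (hNS : ∀ k (hk : k ≤ n),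
      ∃ Qk : Matrix (Fin dA × (Fin k → Fin dX)) (Fin dA × (Fin k → Fin dX)) ℂ
              →ₗ[ℂ] Matrix (Fin k → Fin dY) (Fin k → Fin dY) ℂ,
        ∀ ρ, trYlast hk (Q ρ) = Qk (trXlast hk ρ)) :
    ∀ k (hk : k ≤ n),
      (∀ (a a' : Fin dA) (vk vk' : Fin k → Fin dX) (ux ux' : Fin (n - k) → Fin dX)
          (w w' : Fin k → Fin dY),
        (∑ u : Fin (n - k) → Fin dY,
            choi Q ((a, glue hk vk ux), glue hk w u) ((a', glue hk vk' ux'), glue hk w' u))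
          = (if ux = ux' then ((dX : ℂ) ^ (n - k))⁻¹ else 0)
              * choiReduce hk (choi Q) ((a, vk), w) ((a', vk'), w')) ∧
      ∀ (Qk : Matrix (Fin dA × (Fin k → Fin dX)) (Fin dA × (Fin k → Fin dX)) ℂ
              →ₗ[ℂ] Matrix (Fin k → Fin dY) (Fin k → Fin dY) ℂ),
        (∀ ρ, trYlast hk (Q ρ) = Qk (trXlast hk ρ)) →
        choiReduce hk (choi Q) = choi Qk := by
  intro k hk
  have hdX0 : (dX : ℂ) ≠ 0 := by exact_mod_cast Nat.one_le_iff_ne_zero.mp hdX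
  have hdA0 : (dA : ℂ) ≠ 0 := by exact_mod_cast Nat.one_le_iff_ne_zero.mp hdA
  -- the reduced Choi matrix in terms of any induced channel
  have hred : ∀ (Qk : Matrix (Fin dA × (Fin k → Fin dX)) (Fin dA × (Fin k → Fin dX)) ℂ
              →ₗ[ℂ] Matrix (Fin k → Fin dY) (Fin k → Fin dY) ℂ),
      (∀ ρ, trYlast hk (Q ρ) = Qk (trXlast hk ρ)) →
      ∀ a a' vk vk' w w',
      choiReduce hk (choi Q) ((a, vk), w) ((a', vk'), w')
        = (dX:ℂ) ^ (n - k) * ((dA : ℂ) * (dX:ℂ) ^ n)⁻¹ *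
            Qk (Matrix.single (a, vk) (a', vk') 1) w w' := by
    intro Qk hQk a a' vk vk' w w'
    simp only [choiReduce, Matrix.of_apply]
    have : ∀ ux : Fin (n - k) → Fin dX,
        (∑ u : Fin (n - k) → Fin dY,
          choi Q ((a, glue hk vk ux), glue hk w u) ((a', glue hk vk' ux), glue hk w' u))
        = ((dA : ℂ) * (dX:ℂ) ^ n)⁻¹ * Qk (Matrix.single (a, vk) (a', vk') 1) w w' := by
      intro ux
      rw [choi_key hdX Q hk Qk hQk]
      simp
    rw [Finset.sum_congr rfl (fun ux _ => this ux)]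
    rw [Finset.sum_const]
    simp only [Finset.card_univ, Fintype.card_fun, Fintype.card_fin, nsmul_eq_mul]
    push_cast
    ring
  obtain ⟨Qk0, hQk0⟩ := hNS k hk
  constructor
  · intro a a' vk vk' ux ux' w w'
    rw [choi_key hdX Q hk Qk0 hQk0, hred Qk0 hQk0]
    by_cases h : ux = ux'
    · simp only [h, if_pos rfl, if_true]
      rw [one_mul, ← mul_assoc, ← mul_assoc,
        inv_mul_cancel₀ (pow_ne_zero _ hdX0), one_mul]
    · simp [h]
  · intro Qk hQk
    ext ⟨⟨a, vk⟩, w⟩ ⟨⟨a', vk'⟩, w'⟩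
    rw [hred Qk hQk]
    simp only [choi, Matrix.of_apply]
    have hcard : ((Fintype.card (Fin dA × (Fin k → Fin dX)) : ℂ)) = (dA : ℂ) * (dX:ℂ) ^ k := by
      simp
    rw [hcard]
    congr 1
    have hsplit : (dX:ℂ) ^ n = (dX:ℂ) ^ k * (dX:ℂ) ^ (n - k) := by
      rw [← pow_add]; congr 1; omega
    rw [hsplit]
    field_simp
end

section
/- Operator Chebyshev inequality: Let (Ω, 𝔽, ℙ) be a probability space and X : Ω → {Hermitian d × d complex matrices} a Bochner-integrable random matrix such that X ⊗ X is also Bochner-integrable, with mean μ = 𝔼[X]. Then for every ε > 0: ℙ( ‖X − μ‖∞ ≥ ε ) ≤ (d²/ε²) · ‖𝔼[X ⊗ X] − μ ⊗ μ‖∞. -/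
open MeasureTheory
open scoped ComplexOrder

/-- Operator norm (largest singular value) of a complex matrix. -/
noncomputable def opNorm {m n : Type*} [Fintype m] [Fintype n] [DecidableEq n]
    (M : Matrix m n ℂ) : ℝ :=
  ‖LinearMap.toContinuousLinearMap (Matrix.toEuclideanLin M)‖

lemma euclid_coord_le {m : Type*} [Fintype m] (w : EuclideanSpace ℂ m) (p : m) :
    ‖w p‖ ≤ ‖w‖ := by
  rw [EuclideanSpace.norm_eq]
  rw [show ‖w p‖ = Real.sqrt (‖w p‖ ^ 2) from (Real.sqrt_sq (norm_nonneg _)).symm]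
  apply Real.sqrt_le_sqrt
  exact Finset.single_le_sum (f := fun i => ‖w i‖ ^ 2) (fun i _ => sq_nonneg _) (Finset.mem_univ p)

lemma entry_le_opNorm {m n : Type*} [Fintype m] [Fintype n] [DecidableEq n]
    (A : Matrix m n ℂ) (p : m) (q : n) : ‖A p q‖ ≤ opNorm A := by
  have h := (LinearMap.toContinuousLinearMap (Matrix.toEuclideanLin A)).le_opNorm
    (EuclideanSpace.single q 1)
  have hv : ‖(EuclideanSpace.single q (1:ℂ))‖ = 1 := by
    simp [EuclideanSpace.norm_single]
  rw [hv, mul_one] at h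
  refine le_trans ?_ h
  have hco : (LinearMap.toContinuousLinearMap (Matrix.toEuclideanLin A))
      (EuclideanSpace.single q 1) p = A p q := by
    show Matrix.toEuclideanLin A (EuclideanSpace.single q 1) p = A p q
    rw [Matrix.toEuclideanLin_apply]
    show (Matrix.mulVec A ((WithLp.equiv 2 (n → ℂ)) (EuclideanSpace.single q 1))) p = A p q
    have : (WithLp.equiv 2 (n → ℂ)) (EuclideanSpace.single q 1) = Pi.single q 1 := rfl
    rw [this, Matrix.mulVec_single]; simp
  rw [← hco]
  exact euclid_coord_le _ p

lemma opNorm_le_sqrt_frobenius {m n : Type*} [Fintype m] [Fintype n] [DecidableEq n]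
    (A : Matrix m n ℂ) : opNorm A ≤ Real.sqrt (∑ i, ∑ j, ‖A i j‖ ^ 2) := by
  apply ContinuousLinearMap.opNorm_le_bound _ (Real.sqrt_nonneg _)
  intro x
  have hcoord : ∀ i : m, (LinearMap.toContinuousLinearMap (Matrix.toEuclideanLin A)) x i
      = ∑ j, A i j * x j := by
    intro i
    show Matrix.toEuclideanLin A x i = _
    rw [Matrix.toEuclideanLin_apply]
    show (Matrix.mulVec A ((WithLp.equiv 2 (n → ℂ)) x)) i = _
    rfl
  have hx : ∀ i : m, ‖∑ j, A i j * x j‖ ≤ Real.sqrt (∑ j, ‖A i j‖ ^ 2) * ‖x‖ := by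
    intro i
    set a : EuclideanSpace ℂ n := (WithLp.equiv 2 (n → ℂ)).symm (fun j => star (A i j)) with ha_def
    have ha : ‖a‖ = Real.sqrt (∑ j, ‖A i j‖ ^ 2) := by
      rw [EuclideanSpace.norm_eq]
      congr 1
      apply Finset.sum_congr rfl
      intro j _
      simp [ha_def]
    have h1 : (inner ℂ a x : ℂ) = ∑ j, A i j * x j := by
      rw [PiLp.inner_apply]
      apply Finset.sum_congr rfl
      intro j _
      simp [ha_def, mul_comm]
    calc ‖∑ j, A i j * x j‖ = ‖(inner ℂ a x : ℂ)‖ := by rw [h1]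
      _ ≤ ‖a‖ * ‖x‖ := norm_inner_le_norm a x
      _ = _ := by rw [ha]
  rw [EuclideanSpace.norm_eq]
  have step : ∀ i : m, ‖(LinearMap.toContinuousLinearMap (Matrix.toEuclideanLin A)) x i‖ ^ 2
      ≤ (∑ j, ‖A i j‖ ^ 2) * ‖x‖ ^ 2 := by
    intro i
    rw [hcoord i]
    have := hx i
    have h2 : ‖∑ j, A i j * x j‖ ^ 2 ≤ (Real.sqrt (∑ j, ‖A i j‖ ^ 2) * ‖x‖) ^ 2 :=
      pow_le_pow_left₀ (norm_nonneg _) this 2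
    refine h2.trans_eq ?_
    rw [mul_pow, Real.sq_sqrt]
    positivity
  calc Real.sqrt (∑ i, ‖(LinearMap.toContinuousLinearMap (Matrix.toEuclideanLin A)) x i‖ ^ 2)
      ≤ Real.sqrt (∑ i, (∑ j, ‖A i j‖ ^ 2) * ‖x‖ ^ 2) :=
        Real.sqrt_le_sqrt (Finset.sum_le_sum fun i _ => step i)
    _ = Real.sqrt ((∑ i, ∑ j, ‖A i j‖ ^ 2) * ‖x‖ ^ 2) := by rw [← Finset.sum_mul]
    _ = Real.sqrt (∑ i, ∑ j, ‖A i j‖ ^ 2) * ‖x‖ := by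
        rw [Real.sqrt_mul (by positivity), Real.sqrt_sq (norm_nonneg _)]

/-- **Operator Chebyshev inequality**: for an integrable Hermitian-matrix-valued random
variable `X` with mean `μ`, the probability that `‖X − μ‖∞ ≥ ε` is at most
`(d²/ε²) ‖𝔼[X ⊗ X] − μ ⊗ μ‖∞`. -/
theorem operator_chebyshev
    {Ω : Type*} [MeasurableSpace Ω] (P : Measure Ω) [IsProbabilityMeasure P]
    (d : ℕ) (hd : 1 ≤ d)
    (X : Ω → Matrix (Fin d) (Fin d) ℂ)
    (hherm : ∀ ω, (X ω).IsHermitian)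
    (hmeas : ∀ i j, Measurable fun ω => X ω i j)
    (hint : ∀ i j, Integrable (fun ω => X ω i j) P)
    (hint2 : ∀ i j k l, Integrable (fun ω => X ω i j * X ω k l) P)
    (ε : ℝ) (hε : 0 < ε) :
    P {ω | ε ≤ opNorm (X ω - Matrix.of fun i j => ∫ ω', X ω' i j ∂P)}
      ≤ ENNReal.ofReal
          (((d : ℝ) ^ 2 / ε ^ 2) *
            opNorm
              ((Matrix.of fun (p q : Fin d × Fin d) => ∫ ω', X ω' p.1 q.1 * X ω' p.2 q.2 ∂P)
                - Matrix.of fun (p q : Fin d × Fin d) =>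
                    (∫ ω', X ω' p.1 q.1 ∂P) * ∫ ω', X ω' p.2 q.2 ∂P)) := by
  set μm : Matrix (Fin d) (Fin d) ℂ := Matrix.of fun i j => ∫ ω', X ω' i j ∂P with hμm
  set Y : Ω → Matrix (Fin d) (Fin d) ℂ := fun ω => X ω - μm with hY
  set M : Matrix (Fin d × Fin d) (Fin d × Fin d) ℂ :=
    (Matrix.of fun (p q : Fin d × Fin d) => ∫ ω', X ω' p.1 q.1 * X ω' p.2 q.2 ∂P)
      - Matrix.of fun (p q : Fin d × Fin d) =>
          (∫ ω', X ω' p.1 q.1 ∂P) * ∫ ω', X ω' p.2 q.2 ∂P with hM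
  -- basic entry facts
  have hYapp : ∀ ω i j, Y ω i j = X ω i j - μm i j := fun ω i j => rfl
  -- expansion of products of Y entries
  have hexpand : ∀ (i k j l : Fin d), (fun ω => Y ω i k * Y ω j l)
      = fun ω => X ω i k * X ω j l - X ω i k * μm j l - μm i k * X ω j l + μm i k * μm j l := by
    intro i k j l
    funext ω
    rw [hYapp, hYapp]
    ring
  have hY2 : ∀ i k j l, Integrable (fun ω => Y ω i k * Y ω j l) P := by
    intro i k j l
    rw [hexpand]
    exact (((hint2 i k j l).sub ((hint i k).mul_const _)).sub
      ((hint j l).const_mul _)).add (integrable_const _)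
  -- M entries as integrals of Y ⊗ Y
  have hMeq : ∀ p q : Fin d × Fin d, M p q = ∫ ω, Y ω p.1 q.1 * Y ω p.2 q.2 ∂P := by
    intro p q
    rw [hexpand]
    have hA : Integrable (fun ω => X ω p.1 q.1 * X ω p.2 q.2) P := hint2 _ _ _ _
    have hB : Integrable (fun ω => X ω p.1 q.1 * μm p.2 q.2) P := (hint _ _).mul_const _
    have hC : Integrable (fun ω => μm p.1 q.1 * X ω p.2 q.2) P := (hint _ _).const_mul _
    have hAB : Integrable (fun ω => X ω p.1 q.1 * X ω p.2 q.2
        - X ω p.1 q.1 * μm p.2 q.2) P := hA.sub hB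
    have hABC : Integrable (fun ω => X ω p.1 q.1 * X ω p.2 q.2
        - X ω p.1 q.1 * μm p.2 q.2 - μm p.1 q.1 * X ω p.2 q.2) P := hAB.sub hC
    rw [integral_add hABC (integrable_const _), integral_sub hAB hC, integral_sub hA hB,
      integral_mul_const, integral_const_mul, integral_const]
    simp only [hM, hμm, Matrix.sub_apply, Matrix.of_apply, measure_univ, probReal_univ, ENNReal.toReal_one,
      one_smul]
    ring
  -- hermitian property of Y
  have hμherm : μm.IsHermitian := by
    apply Matrix.IsHermitian.ext
    intro i j
    show star (μm j i) = μm i j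
    rw [show μm j i = ∫ ω', X ω' j i ∂P from rfl,
      show μm i j = ∫ ω', X ω' i j ∂P from rfl, ← starRingEnd_apply, ← integral_conj]
    refine integral_congr_ae (Filter.Eventually.of_forall fun ω => ?_)
    exact (hherm ω).apply i j
  have hYconj : ∀ ω i j, (starRingEnd ℂ) (Y ω i j) = Y ω j i := by
    intro ω i j
    rw [hYapp, hYapp, map_sub]
    congr 1
    · rw [starRingEnd_apply]; exact (hherm ω).apply j i
    · rw [starRingEnd_apply]; exact hμherm.apply j i
  -- the scalar random variable
  set f : Ω → ℝ := fun ω => ∑ i, ∑ j, ‖Y ω i j‖ ^ 2 with hf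
  have hfnn : ∀ ω, 0 ≤ f ω := by
    intro ω; apply Finset.sum_nonneg; intro i _; apply Finset.sum_nonneg; intro j _; positivity
  have hfre : ∀ ω i j, (‖Y ω i j‖ : ℝ) ^ 2 = (Y ω i j * Y ω j i).re := by
    intro ω i j
    rw [← hYconj ω i j, Complex.mul_conj]
    simp [Complex.sq_norm]
  have hfint : Integrable f P := by
    apply integrable_finset_sum
    intro i _
    apply integrable_finset_sum
    intro j _
    have : (fun ω => ‖Y ω i j‖ ^ 2) = fun ω => RCLike.re (Y ω i j * Y ω j i) := by
      funext ω; rw [hfre]; rfl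
    rw [this]
    exact (hY2 i j j i).re
  -- expected value of f is bounded by d^2 * opNorm M
  have hEf : ∫ ω, f ω ∂P ≤ (d : ℝ) ^ 2 * opNorm M := by
    rw [hf]
    rw [integral_finset_sum _ (fun i _ => integrable_finset_sum _ (fun j _ => by
      have : (fun ω => ‖Y ω i j‖ ^ 2) = fun ω => RCLike.re (Y ω i j * Y ω j i) := by
        funext ω; rw [hfre]; rfl
      rw [this]; exact (hY2 i j j i).re))]
    have hstep : ∀ i : Fin d, ∫ ω, ∑ j, ‖Y ω i j‖ ^ 2 ∂P ≤ ∑ j : Fin d, opNorm M := by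
      intro i
      rw [integral_finset_sum _ (fun j _ => by
        have : (fun ω => ‖Y ω i j‖ ^ 2) = fun ω => RCLike.re (Y ω i j * Y ω j i) := by
          funext ω; rw [hfre]; rfl
        rw [this]; exact (hY2 i j j i).re)]
      apply Finset.sum_le_sum
      intro j _
      have h1 : ∫ ω, ‖Y ω i j‖ ^ 2 ∂P = RCLike.re (∫ ω, Y ω i j * Y ω j i ∂P) := by
        rw [← integral_re (hY2 i j j i)]
        refine integral_congr_ae (Filter.Eventually.of_forall fun ω => ?_)
        exact hfre ω i j
      rw [h1]
      have h2 : (∫ ω, Y ω i j * Y ω j i ∂P) = M ((i, j) : Fin d × Fin d) ((j, i) : Fin d × Fin d) :=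
        (hMeq ((i, j) : Fin d × Fin d) ((j, i) : Fin d × Fin d)).symm
      rw [h2]
      calc RCLike.re (M ((i, j) : Fin d × Fin d) ((j, i) : Fin d × Fin d))
          ≤ ‖M ((i, j) : Fin d × Fin d) ((j, i) : Fin d × Fin d)‖ := RCLike.re_le_norm _
        _ ≤ opNorm M := entry_le_opNorm M _ _
    calc ∑ i, ∫ ω, ∑ j, ‖Y ω i j‖ ^ 2 ∂P ≤ ∑ i : Fin d, ∑ j : Fin d, opNorm M :=
          Finset.sum_le_sum fun i _ => hstep i
      _ = (d : ℝ) ^ 2 * opNorm M := by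
          simp [Finset.sum_const, Finset.card_univ]
          try ring
  -- measurability of f
  have hfmeas : Measurable f := by
    apply Finset.measurable_sum
    intro i _
    apply Finset.measurable_sum
    intro j _
    exact (((hmeas i j).sub measurable_const).norm).pow measurable_const
  -- Chebyshev via lintegral Markov
  have hsub : {ω | ε ≤ opNorm (X ω - μm)} ⊆
      {ω | ENNReal.ofReal (ε ^ 2) ≤ ENNReal.ofReal (f ω)} := by
    intro ω hω
    simp only [Set.mem_setOf_eq] at hω ⊢
    apply ENNReal.ofReal_le_ofReal
    have h2 : opNorm (Y ω) ≤ Real.sqrt (f ω) := opNorm_le_sqrt_frobenius (Y ω)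
    have h3 : ε ≤ Real.sqrt (f ω) := le_trans hω h2
    have := Real.sqrt_le_sqrt (le_of_eq (rfl : f ω = f ω))
    nlinarith [Real.sq_sqrt (hfnn ω), Real.sqrt_nonneg (f ω)]
  have hmarkov := meas_ge_le_lintegral_div
    (μ := P) (f := fun ω => ENNReal.ofReal (f ω))
    (hfmeas.ennreal_ofReal).aemeasurable
    (ε := ENNReal.ofReal (ε ^ 2))
    (by simp [ENNReal.ofReal_eq_zero]; positivity) (by simp)
  have hlint : ∫⁻ ω, ENNReal.ofReal (f ω) ∂P = ENNReal.ofReal (∫ ω, f ω ∂P) :=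
    (ofReal_integral_eq_lintegral_ofReal hfint (Filter.Eventually.of_forall hfnn)).symm
  calc P {ω | ε ≤ opNorm (X ω - μm)}
      ≤ P {ω | ENNReal.ofReal (ε ^ 2) ≤ ENNReal.ofReal (f ω)} := measure_mono hsub
    _ ≤ (∫⁻ ω, ENNReal.ofReal (f ω) ∂P) / ENNReal.ofReal (ε ^ 2) := hmarkov
    _ = ENNReal.ofReal (∫ ω, f ω ∂P) / ENNReal.ofReal (ε ^ 2) := by rw [hlint]
    _ ≤ ENNReal.ofReal ((d : ℝ) ^ 2 * opNorm M) / ENNReal.ofReal (ε ^ 2) := by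
        exact ENNReal.div_le_div_right (ENNReal.ofReal_le_ofReal hEf) _
    _ = ENNReal.ofReal (((d : ℝ) ^ 2 * opNorm M) / ε ^ 2) := by
        rw [ENNReal.ofReal_div_of_pos (by positivity)]
    _ = ENNReal.ofReal (((d : ℝ) ^ 2 / ε ^ 2) * opNorm M) := by
        congr 1
        ring
end

section
/- Let (Ω, 𝔽, ℙ) be a probability space and X : Ω → {Hermitian d × d complex matrices} a Bochner-integrable random matrix such that X ⊗ X is also Bochner-integrable, with mean μ = 𝔼[X]. Then 𝔼[ ‖X − μ‖∞² ] ≤ d² · ‖𝔼[X ⊗ X] − μ ⊗ μ‖∞. -/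
open MeasureTheory
open scoped ComplexOrder

lemma euclid_coord_le_s11 {ι : Type*} [Fintype ι] (v : EuclideanSpace ℂ ι) (i : ι) :
    ‖v i‖ ≤ ‖v‖ := by
  rw [EuclideanSpace.norm_eq]
  have h1 : ‖v i‖ ^ 2 ≤ ∑ k, ‖v k‖ ^ 2 :=
    Finset.single_le_sum (f := fun k => ‖v k‖ ^ 2) (fun k _ => by positivity) (Finset.mem_univ i)
  calc ‖v i‖ = Real.sqrt (‖v i‖ ^ 2) := by rw [Real.sqrt_sq (norm_nonneg _)]
    _ ≤ _ := Real.sqrt_le_sqrt h1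

lemma opNorm_entry_le {m n : Type*} [Fintype m] [Fintype n] [DecidableEq n]
    (M : Matrix m n ℂ) (i : m) (j : n) : ‖M i j‖ ≤ opNorm M := by
  have h := (LinearMap.toContinuousLinearMap (Matrix.toEuclideanLin M)).le_opNorm
    (EuclideanSpace.single j 1)
  have hv : LinearMap.toContinuousLinearMap (Matrix.toEuclideanLin M)
      (EuclideanSpace.single j 1) = (WithLp.equiv 2 (m → ℂ)).symm (M.mulVec (Pi.single j 1)) := by
    rfl
  have hval : ‖M i j‖ ≤ ‖LinearMap.toContinuousLinearMap (Matrix.toEuclideanLin M)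
      (EuclideanSpace.single j 1)‖ := by
    have := euclid_coord_le_s11 (LinearMap.toContinuousLinearMap (Matrix.toEuclideanLin M)
      (EuclideanSpace.single j 1)) i
    rwa [hv, show ((WithLp.equiv 2 (m → ℂ)).symm (M.mulVec (Pi.single j 1))) i = M i j by
      simp [Matrix.mulVec_single]] at this
  rw [EuclideanSpace.norm_single] at h
  simpa [opNorm] using hval.trans (by simpa using h)

lemma opNorm_sq_le {n : Type*} [Fintype n] [DecidableEq n] (M : Matrix n n ℂ) :
    opNorm M ^ 2 ≤ ∑ i, ∑ j, ‖M i j‖ ^ 2 := by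
  set S := ∑ i, ∑ j, ‖M i j‖ ^ 2 with hS
  have hS0 : 0 ≤ S := Finset.sum_nonneg fun i _ => Finset.sum_nonneg fun j _ => sq_nonneg _
  have hb : opNorm M ≤ Real.sqrt S := by
    refine ContinuousLinearMap.opNorm_le_bound _ (Real.sqrt_nonneg _) fun x => ?_
    have hx : ‖x‖ = Real.sqrt (∑ j, ‖x j‖ ^ 2) := EuclideanSpace.norm_eq x
    have hLx : ‖LinearMap.toContinuousLinearMap (Matrix.toEuclideanLin M) x‖
        = Real.sqrt (∑ i, ‖∑ j, M i j * x j‖ ^ 2) := by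
      rw [EuclideanSpace.norm_eq]
      congr 1
    rw [hLx, hx, ← Real.sqrt_mul hS0]
    refine Real.sqrt_le_sqrt ?_
    have key : ∀ i, ‖∑ j, M i j * x j‖ ^ 2 ≤ (∑ j, ‖M i j‖ ^ 2) * ∑ j, ‖x j‖ ^ 2 := by
      intro i
      have h1 : ‖∑ j, M i j * x j‖ ≤ ∑ j, ‖M i j‖ * ‖x j‖ := by
        refine (norm_sum_le _ _).trans ?_
        exact Finset.sum_le_sum fun j _ => (norm_mul _ _).le
      calc ‖∑ j, M i j * x j‖ ^ 2 ≤ (∑ j, ‖M i j‖ * ‖x j‖) ^ 2 := by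
            exact pow_le_pow_left₀ (norm_nonneg _) h1 2
        _ ≤ (∑ j, ‖M i j‖ ^ 2) * ∑ j, ‖x j‖ ^ 2 :=
            Finset.sum_mul_sq_le_sq_mul_sq _ _ _
    calc ∑ i, ‖∑ j, M i j * x j‖ ^ 2 ≤ ∑ i, (∑ j, ‖M i j‖ ^ 2) * ∑ j, ‖x j‖ ^ 2 :=
          Finset.sum_le_sum fun i _ => key i
      _ = S * ∑ j, ‖x j‖ ^ 2 := by rw [← Finset.sum_mul]
  calc opNorm M ^ 2 ≤ Real.sqrt S ^ 2 := by
        have h0 : 0 ≤ opNorm M := norm_nonneg _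
        exact pow_le_pow_left₀ h0 hb 2
    _ = S := Real.sq_sqrt hS0

/-- Second-moment bound behind the operator Chebyshev inequality:
`𝔼[‖X − μ‖∞²] ≤ d² ‖𝔼[X ⊗ X] − μ ⊗ μ‖∞`. -/
theorem operator_second_moment_bound
    {Ω : Type*} [MeasurableSpace Ω] (P : Measure Ω) [IsProbabilityMeasure P]
    (d : ℕ) (hd : 1 ≤ d)
    (X : Ω → Matrix (Fin d) (Fin d) ℂ)
    (hherm : ∀ ω, (X ω).IsHermitian)
    (hmeas : ∀ i j, Measurable fun ω => X ω i j)
    (hint : ∀ i j, Integrable (fun ω => X ω i j) P)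
    (hint2 : ∀ i j k l, Integrable (fun ω => X ω i j * X ω k l) P) :
    (∫ ω, (opNorm (X ω - Matrix.of fun i j => ∫ ω', X ω' i j ∂P)) ^ 2 ∂P)
      ≤ (d : ℝ) ^ 2 *
          opNorm
            ((Matrix.of fun (p q : Fin d × Fin d) => ∫ ω', X ω' p.1 q.1 * X ω' p.2 q.2 ∂P)
              - Matrix.of fun (p q : Fin d × Fin d) =>
                  (∫ ω', X ω' p.1 q.1 ∂P) * ∫ ω', X ω' p.2 q.2 ∂P) := by
  set μ : Fin d → Fin d → ℂ := fun i j => ∫ ω', X ω' i j ∂P with hμdef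
  set C : Matrix (Fin d × Fin d) (Fin d × Fin d) ℂ :=
    (Matrix.of fun (p q : Fin d × Fin d) => ∫ ω', X ω' p.1 q.1 * X ω' p.2 q.2 ∂P)
      - Matrix.of fun (p q : Fin d × Fin d) =>
          (∫ ω', X ω' p.1 q.1 ∂P) * ∫ ω', X ω' p.2 q.2 ∂P with hCdef
  -- hermitian-ness transferred
  have hstar : ∀ ω i j, (starRingEnd ℂ) (X ω i j) = X ω j i := by
    intro ω i j
    have := congr_fun (congr_fun (hherm ω).eq j) i
    simpa [Matrix.conjTranspose_apply] using this
  have hμstar : ∀ i j, (starRingEnd ℂ) (μ i j) = μ j i := by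
    intro i j
    rw [hμdef, ← integral_conj]
    exact integral_congr_ae (Filter.Eventually.of_forall fun ω => hstar ω i j)
  -- integrability of the pointwise Frobenius bound
  have hFint : ∀ i j : Fin d,
      Integrable (fun ω => (X ω i j - μ i j) * (X ω j i - μ j i)) P := by
    intro i j
    have heq : (fun ω => (X ω i j - μ i j) * (X ω j i - μ j i))
        = fun ω => X ω i j * X ω j i - μ i j * X ω j i - X ω i j * μ j i + μ i j * μ j i := by
      funext ω; ring
    rw [heq]
    exact (((hint2 i j j i).sub ((hint j i).const_mul _)).sub
      ((hint i j).mul_const _)).add (integrable_const _)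
  have hnormsq : ∀ i j : Fin d, ∀ ω,
      ‖X ω i j - μ i j‖ ^ 2 = ((X ω i j - μ i j) * (X ω j i - μ j i)).re := by
    intro i j ω
    have hc : (starRingEnd ℂ) (X ω i j - μ i j) = X ω j i - μ j i := by
      rw [map_sub, hstar, hμstar]
    rw [← hc, Complex.mul_conj, Complex.ofReal_re, Complex.normSq_eq_norm_sq]
  have hgint : Integrable (fun ω => ∑ i, ∑ j, ‖X ω i j - μ i j‖ ^ 2) P := by
    refine integrable_finset_sum _ fun i _ => integrable_finset_sum _ fun j _ => ?_
    have : (fun ω => ‖X ω i j - μ i j‖ ^ 2)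
        = fun ω => ((X ω i j - μ i j) * (X ω j i - μ j i)).re := by
      funext ω; exact hnormsq i j ω
    rw [this]
    exact (hFint i j).re
  -- step 1 : integral mono
  have step1 : (∫ ω, (opNorm (X ω - Matrix.of fun i j => ∫ ω', X ω' i j ∂P)) ^ 2 ∂P)
      ≤ ∫ ω, ∑ i, ∑ j, ‖X ω i j - μ i j‖ ^ 2 ∂P := by
    refine integral_mono_of_nonneg (Filter.Eventually.of_forall fun ω => sq_nonneg _)
      hgint (Filter.Eventually.of_forall fun ω => ?_)
    have := opNorm_sq_le (X ω - Matrix.of fun i j => ∫ ω', X ω' i j ∂P)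
    simpa [Matrix.sub_apply, hμdef] using this
  refine step1.trans ?_
  -- step 2 : compute/bound the RHS integral
  have hsplit : (∫ ω, ∑ i, ∑ j, ‖X ω i j - μ i j‖ ^ 2 ∂P)
      = ∑ i, ∑ j, ∫ ω, ‖X ω i j - μ i j‖ ^ 2 ∂P := by
    rw [integral_finset_sum]
    · exact Finset.sum_congr rfl fun i _ => integral_finset_sum _ fun j _ => by
        have : (fun ω => ‖X ω i j - μ i j‖ ^ 2)
            = fun ω => ((X ω i j - μ i j) * (X ω j i - μ j i)).re := by
          funext ω; exact hnormsq i j ω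
        rw [this]; exact (hFint i j).re
    · intro i _
      refine integrable_finset_sum _ fun j _ => ?_
      have : (fun ω => ‖X ω i j - μ i j‖ ^ 2)
          = fun ω => ((X ω i j - μ i j) * (X ω j i - μ j i)).re := by
        funext ω; exact hnormsq i j ω
      rw [this]; exact (hFint i j).re
  rw [hsplit]
  -- each summand equals (C ((i,j),(j,i))).re
  have hterm : ∀ i j : Fin d,
      (∫ ω, ‖X ω i j - μ i j‖ ^ 2 ∂P) = (C (i, j) (j, i)).re := by
    intro i j
    have h1 : (∫ ω, ‖X ω i j - μ i j‖ ^ 2 ∂P)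
        = (∫ ω, (X ω i j - μ i j) * (X ω j i - μ j i) ∂P).re := by
      have h2 : (∫ ω, ((X ω i j - μ i j) * (X ω j i - μ j i)).re ∂P)
          = (∫ ω, (X ω i j - μ i j) * (X ω j i - μ j i) ∂P).re := integral_re (hFint i j)
      rw [← h2]
      exact integral_congr_ae (Filter.Eventually.of_forall fun ω => hnormsq i j ω)
    rw [h1]
    congr 1
    have heq : (fun ω => (X ω i j - μ i j) * (X ω j i - μ j i))
        = fun ω => X ω i j * X ω j i - μ i j * X ω j i - X ω i j * μ j i + μ i j * μ j i := by
      funext ω; ring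
    rw [heq, integral_add, integral_sub, integral_sub, integral_const_mul, integral_mul_const,
      integral_const]
    · simp only [hCdef, Matrix.sub_apply, Matrix.of_apply, hμdef]
      simp [measure_univ]
    · exact hint2 i j j i
    · exact (hint j i).const_mul _
    · exact (hint2 i j j i).sub ((hint j i).const_mul _)
    · exact (hint i j).mul_const _
    · exact ((hint2 i j j i).sub ((hint j i).const_mul _)).sub ((hint i j).mul_const _)
    · exact integrable_const _
  calc (∑ i, ∑ j, ∫ ω, ‖X ω i j - μ i j‖ ^ 2 ∂P)
      ≤ ∑ i : Fin d, ∑ j : Fin d, opNorm C := by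
        refine Finset.sum_le_sum fun i _ => Finset.sum_le_sum fun j _ => ?_
        rw [hterm i j]
        exact (Complex.re_le_norm _).trans
          (by simpa using opNorm_entry_le C (i, j) (j, i))
    _ = (d : ℝ) ^ 2 * opNorm C := by
        simp [Finset.sum_const, Finset.card_univ]
        ring
end

section
/- For all natural numbers d ≥ 1, n ≥ 1, and 0 ≤ k ≤ n, the ratio of binomial coefficients satisfies C(n − k + d − 1, d − 1) / C(n + d − 1, d − 1) ≥ 1 − d·k/n (as real numbers). Equivalently, the dimensions of the symmetric subspaces of (ℂ^d)^{⊗(n−k)} and (ℂ^d)^{⊗n} satisfy dim H_sym(n−k) / dim H_sym(n) ≥ 1 − dk/n. -/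
set_option maxHeartbeats 1000000 in
private lemma choose_step (m e : ℕ) :
    (m + e + 1) * Nat.choose (m + e) e = (m + 1) * Nat.choose (m + e + 1) e := by
  have h := Nat.add_one_mul_choose_eq (m + e) m
  have h1 : Nat.choose (m + e) m = Nat.choose (m + e) e := Nat.choose_symm_add
  have h2 : Nat.choose (m + e + 1) (m + 1) = Nat.choose (m + e + 1) e := by
    have h3 : m + e + 1 = (m + 1) + e := by omega
    rw [h3]; exact Nat.choose_symm_add
  rw [h1, h2] at h
  rw [h, Nat.mul_comm]

set_option maxHeartbeats 1000000 in
private lemma aux_ratio (e : ℕ) : ∀ (k m : ℕ),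
    (1 : ℝ) - ((e : ℝ) + 1) * k / ((m : ℝ) + k) ≤
      (Nat.choose (m + e) e : ℝ) / (Nat.choose (m + k + e) e : ℝ)
  | 0, m => by
      have hpos : 0 < Nat.choose (m + e) e := Nat.choose_pos (Nat.le_add_left e m)
      have h0 : (Nat.choose (m + e) e : ℝ) ≠ 0 := by positivity
      simp [h0]
  | (k + 1), m => by
      have ih := aux_ratio e k (m + 1)
      have e1 : m + 1 + e = m + e + 1 := by omega
      have e2 : m + (k + 1) + e = m + 1 + k + e := by omega
      rw [e1] at ih
      rw [e2]
      have hA : (0:ℝ) < (Nat.choose (m + e) e : ℝ) := by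
        exact_mod_cast Nat.choose_pos (Nat.le_add_left e m)
      have hB : (0:ℝ) < (Nat.choose (m + e + 1) e : ℝ) := by
        have : 0 < Nat.choose (m + e + 1) e := Nat.choose_pos (by omega)
        exact_mod_cast this
      have hD : (0:ℝ) < (Nat.choose (m + 1 + k + e) e : ℝ) := by
        exact_mod_cast Nat.choose_pos (Nat.le_add_left e (m+1+k))
      set A := (Nat.choose (m + e) e : ℝ) with hAdef
      set B := (Nat.choose (m + e + 1) e : ℝ) with hBdef
      set D := (Nat.choose (m + 1 + k + e) e : ℝ) with hDdef
      have hid : ((m:ℝ) + e + 1) * A = ((m:ℝ) + 1) * B := by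
        have hnat := choose_step m e
        rw [hAdef, hBdef]
        push_cast
        exact_mod_cast hnat
      -- N = m + k + 1 > 0
      push_cast at ih ⊢
      set N : ℝ := (m:ℝ) + ((k:ℝ) + 1) with hNdef
      have hN : (0:ℝ) < N := by positivity
      have hN' : ((m:ℝ) + 1 + (k:ℝ)) = N := by rw [hNdef]; ring
      rw [hN'] at ih
      -- from ih : 1 - (e+1)k/N ≤ B/D
      have hIH' : (N - ((e:ℝ)+1)*k) * D ≤ N * B := by
        have h1 : (1 - ((e:ℝ)+1)*k/N) * D ≤ B := by
          calc (1 - ((e:ℝ)+1)*k/N) * D ≤ (B / D) * D := by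
                apply mul_le_mul_of_nonneg_right ih (le_of_lt hD)
            _ = B := by field_simp
        have h2 : ((e:ℝ)+1)*k/N * N = ((e:ℝ)+1)*k := div_mul_cancel₀ _ hN.ne'
        nlinarith [mul_le_mul_of_nonneg_right h1 (le_of_lt hN)]
      rcases le_or_gt N (((e:ℝ)+1)*(k+1)) with hc | hc
      · -- target LHS ≤ 0
        have hle : (1 : ℝ) - ((e : ℝ) + 1) * (k+1) / N ≤ 0 := by
          rw [sub_nonpos, le_div_iff₀ hN]; linarith
        calc (1 : ℝ) - ((e : ℝ) + 1) * (k+1) / N ≤ 0 := hle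
          _ ≤ A / D := by positivity
      · -- main case
        have hkN : ((e:ℝ)+1)*k ≤ N := by nlinarith
        have key : (N - ((e:ℝ)+1)*(k+1)) * ((m:ℝ)+e+1) ≤ (N - ((e:ℝ)+1)*k) * ((m:ℝ)+1) := by
          have hm0 : (0:ℝ) ≤ (m:ℝ) := Nat.cast_nonneg m
          have he0 : (0:ℝ) ≤ (e:ℝ) := Nat.cast_nonneg e
          have hk0 : (0:ℝ) ≤ (k:ℝ) := Nat.cast_nonneg k
          nlinarith [mul_nonneg he0 hk0, mul_nonneg (mul_nonneg he0 he0) hk0]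
        have htarget' : (N - ((e:ℝ)+1)*(k+1)) * D ≤ N * A := by
          have hme : (0:ℝ) < (m:ℝ) + e + 1 := by positivity
          have step1 : (N - ((e:ℝ)+1)*(k+1)) * ((m:ℝ)+e+1) * D ≤ (N - ((e:ℝ)+1)*k) * ((m:ℝ)+1) * D :=
            mul_le_mul_of_nonneg_right key (le_of_lt hD)
          have step2 : (N - ((e:ℝ)+1)*k) * ((m:ℝ)+1) * D ≤ N * (((m:ℝ)+1) * B) := by
            nlinarith [mul_le_mul_of_nonneg_left hIH' (by positivity : (0:ℝ) ≤ (m:ℝ)+1)]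
          have step3 : N * (((m:ℝ)+1) * B) = N * (((m:ℝ)+e+1) * A) := by rw [← hid]
          have : (N - ((e:ℝ)+1)*(k+1)) * ((m:ℝ)+e+1) * D ≤ ((m:ℝ)+e+1) * (N * A) := by
            calc (N - ((e:ℝ)+1)*(k+1)) * ((m:ℝ)+e+1) * D ≤ N * (((m:ℝ)+1) * B) := le_trans step1 step2
              _ = ((m:ℝ)+e+1) * (N * A) := by rw [step3]; ring
          nlinarith [this]
        rw [le_div_iff₀ hD]
        have hrw : (1 - ((e:ℝ)+1)*((k:ℝ)+1)/N) * D = ((N - ((e:ℝ)+1)*((k:ℝ)+1)) * D) / N := by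
          field_simp
        rw [hrw, div_le_iff₀ hN]
        nlinarith [htarget']

/-- the ratio of symmetric-subspace dimensions satisfies
`dim H_sym(n−k) / dim H_sym(n) = C(n−k+d−1, d−1) / C(n+d−1, d−1) ≥ 1 − dk/n`. -/
theorem symmetric_subspace_dimension_ratio
    (d n k : ℕ) (hd : 1 ≤ d) (hn : 1 ≤ n) (hk : k ≤ n) :
    (1 : ℝ) - (d : ℝ) * k / n
      ≤ (Nat.choose (n - k + d - 1) (d - 1) : ℝ) / (Nat.choose (n + d - 1) (d - 1) : ℝ) := by
  obtain ⟨e, rfl⟩ : ∃ e, d = e + 1 := ⟨d - 1, by omega⟩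
  obtain ⟨m, rfl⟩ : ∃ m, n = m + k := ⟨n - k, by omega⟩
  have h1 : m + k - k + (e + 1) - 1 = m + e := by omega
  have h2 : m + k + (e + 1) - 1 = m + k + e := by omega
  have h3 : e + 1 - 1 = e := by omega
  rw [h1, h2, h3]
  have := aux_ratio e k m
  push_cast
  push_cast at this
  linarith
end
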